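/- Let N ≥ 4 be an integer and let s = s_N^{(N−3)}. Then the hypercube I_s^{C(N,2)} is contained in Ω_N := J_N((0,π)^{C(N,2)}); that is, for every point (x_{ij})_{1≤i<j≤N} with each x_{ij} ∈ I_s, there exist φ_{ij} ∈ (0,π) (1 ≤ i < j ≤ N) such that α_{ij}(φ_{1i}, φ_{1j}, …, φ_{i−1,i}, φ_{i−1,j}, φ_{ij}) = x_{ij} for all 1 ≤ i < j ≤ N. -/
import Mathlib


open Real Finset

/-- I_s = [(π−s)/2, (π+s)/2]. -/
noncomputable def Iset (s : ℝ) : Set ℝ := Set.Icc ((Real.pi - s) / 2) ((Real.pi + s) / 2)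

/-- F(x₁,…,x_{2r}) = Σ_{m=1}^{r} cos(a_m)cos(b_m)·∏_{ℓ=1}^{m−1} sin(a_ℓ)sin(b_ℓ),
where a_m = x_{2m−1}, b_m = x_{2m}. -/
noncomputable def Fangle (a b : ℕ → ℝ) (r : ℕ) : ℝ :=
  ∑ m ∈ Finset.Icc 1 r, Real.cos (a m) * Real.cos (b m) *
    ∏ l ∈ Finset.Icc 1 (m - 1), (Real.sin (a l) * Real.sin (b l))

/-- X(x₁,…,x_{2r}) = ∏_{m=1}^{r} sin(a_m)sin(b_m). -/
noncomputable def Xangle (a b : ℕ → ℝ) (r : ℕ) : ℝ :=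
  ∏ m ∈ Finset.Icc 1 r, (Real.sin (a m) * Real.sin (b m))

/-- E(m,s) = m·sin²(s/2) − cos(s/2)^{2m} + sin(s/2). -/
noncomputable def Efun (m : ℕ) (s : ℝ) : ℝ :=
  (m : ℝ) * Real.sin (s / 2) ^ 2 - Real.cos (s / 2) ^ (2 * m) + Real.sin (s / 2)

/-- G(N,j,x,s) = (N−j−2)·sin²(s/2) − sin(x/2)·cos(s/2)^{2(N−j−2)} + sin(s/2). -/
noncomputable def Gfun (N j : ℕ) (x s : ℝ) : ℝ :=
  ((N - j - 2 : ℕ) : ℝ) * Real.sin (s / 2) ^ 2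
    - Real.sin (x / 2) * Real.cos (s / 2) ^ (2 * (N - j - 2)) + Real.sin (s / 2)

/-- The sequence s_N^{(j)}: s_N^{(0)} = inf{s > 0 : E(N−2,s) = 0},
s_N^{(j)} = inf{s > 0 : G(N,j,s_N^{(j−1)},s) = 0}. -/
noncomputable def sSeq (N : ℕ) : ℕ → ℝ
  | 0 => sInf {s : ℝ | 0 < s ∧ Efun (N - 2) s = 0}
  | j + 1 => sInf {s : ℝ | 0 < s ∧ Gfun N (j + 1) (sSeq N j) s = 0}

/-- s is N-good: for all x₁,…,x_{2(N−2)} ∈ I_s,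
I_s ⊆ α_{N−1,N}({x₁}×⋯×{x_{2(N−2)}}×(0,π)). -/
def NGood (N : ℕ) (s : ℝ) : Prop :=
  ∀ a b : ℕ → ℝ, (∀ m ∈ Finset.Icc 1 (N - 2), a m ∈ Iset s ∧ b m ∈ Iset s) →
    ∀ y ∈ Iset s, ∃ φ ∈ Set.Ioo (0 : ℝ) Real.pi,
      Real.arccos (Fangle a b (N - 2) + Real.cos φ * Xangle a b (N - 2)) = y

/-- s is (N,j)-good: for all x₁,…,x_{2(N−j−2)} ∈ I_s,
I_s ⊆ α_{N−j−1,N−j}({x₁}×⋯×{x_{2(N−j−2)}}×I_{s_N^{(j−1)}}). -/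
def NjGood (N j : ℕ) (s : ℝ) : Prop :=
  ∀ a b : ℕ → ℝ, (∀ m ∈ Finset.Icc 1 (N - j - 2), a m ∈ Iset s ∧ b m ∈ Iset s) →
    ∀ y ∈ Iset s, ∃ φ ∈ Iset (sSeq N (j - 1)),
      Real.arccos (Fangle a b (N - j - 2) + Real.cos φ * Xangle a b (N - j - 2)) = y

/-- F in the expression for α_{ij}. -/
noncomputable def Fphi (φ : ℕ → ℕ → ℝ) (i j : ℕ) : ℝ :=
  ∑ m ∈ Finset.Icc 1 (i - 1), Real.cos (φ m i) * Real.cos (φ m j) *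
    ∏ l ∈ Finset.Icc 1 (m - 1), (Real.sin (φ l i) * Real.sin (φ l j))

/-- X in the expression for α_{ij}. -/
noncomputable def Xphi (φ : ℕ → ℕ → ℝ) (i j : ℕ) : ℝ :=
  ∏ m ∈ Finset.Icc 1 (i - 1), (Real.sin (φ m i) * Real.sin (φ m j))

/-- α_{ij} = φ_{ij} if i = 1, and arccos(F + cos(φ_{ij})·X) if i ≥ 2. -/
noncomputable def alphaMap (φ : ℕ → ℕ → ℝ) (i j : ℕ) : ℝ :=
  if i = 1 then φ i j
  else Real.arccos (Fphi φ i j + Real.cos (φ i j) * Xphi φ i j)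

-- ===== auxiliary lemmas =====


lemma root_lemma {f : ℝ → ℝ} (hf : Continuous f) (h0 : f 0 < 0) {b : ℝ} (hb : 0 < b)
    (hfb : 0 ≤ f b) :
    0 < sInf {s : ℝ | 0 < s ∧ f s = 0} ∧ sInf {s : ℝ | 0 < s ∧ f s = 0} ≤ b ∧
      f (sInf {s : ℝ | 0 < s ∧ f s = 0}) = 0 := by
  set S := {s : ℝ | 0 < s ∧ f s = 0} with hS
  obtain ⟨t, ht, hft⟩ := intermediate_value_Icc hb.le hf.continuousOn
    (Set.mem_Icc.mpr ⟨h0.le, hfb⟩)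
  have ht0 : 0 < t := by
    rcases lt_or_eq_of_le ht.1 with h | h
    · exact h
    · exfalso; rw [← h] at hft; exact absurd hft h0.ne
  have htS : t ∈ S := ⟨ht0, hft⟩
  have hopen : IsOpen (f ⁻¹' Set.Iio 0) := (isOpen_Iio).preimage hf
  obtain ⟨δ, hδ0, hδ⟩ := Metric.isOpen_iff.mp hopen 0 h0
  have hSδ : S = {s : ℝ | f s = 0} ∩ Set.Ici (δ/2) := by
    ext s
    constructor
    · rintro ⟨hs0, hsf⟩
      refine ⟨hsf, ?_⟩
      rw [Set.mem_Ici]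
      by_contra hcon
      rw [not_le] at hcon
      have hball : s ∈ Metric.ball (0:ℝ) δ := by
        simp only [Metric.mem_ball, Real.dist_eq, sub_zero, abs_of_pos hs0]
        linarith
      have hneg := hδ hball
      simp only [Set.mem_preimage, Set.mem_Iio] at hneg
      rw [hsf] at hneg
      exact lt_irrefl 0 hneg
    · rintro ⟨hsf, hs⟩
      exact ⟨lt_of_lt_of_le (by linarith) hs, hsf⟩
  have hclosed : IsClosed S := by
    rw [hSδ]
    exact (isClosed_singleton.preimage hf).inter isClosed_Ici
  have hbdd : BddBelow S := ⟨0, fun s hs => hs.1.le⟩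
  have hmem : sInf S ∈ S := hclosed.csInf_mem ⟨t, htS⟩ hbdd
  exact ⟨hmem.1, (csInf_le hbdd htS).trans ht.2, hmem.2⟩

lemma Efun_continuous (m : ℕ) : Continuous (Efun m) := by
  unfold Efun; fun_prop

lemma Gfun_continuous (N j : ℕ) (x : ℝ) : Continuous (Gfun N j x) := by
  unfold Gfun; fun_prop

lemma sSeq_zero_def (N : ℕ) : sSeq N 0 = sInf {s : ℝ | 0 < s ∧ Efun (N - 2) s = 0} := rfl

lemma sSeq_succ_def (N j : ℕ) :
    sSeq N (j+1) = sInf {s : ℝ | 0 < s ∧ Gfun N (j + 1) (sSeq N j) s = 0} := rfl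

lemma Efun_zero_neg (N : ℕ) : Efun (N - 2) 0 < 0 := by
  unfold Efun; simp [Real.sin_zero, Real.cos_zero]

lemma Efun_pi (N : ℕ) (hN : 4 ≤ N) : 0 < Efun (N - 2) π := by
  unfold Efun
  rw [Real.sin_pi_div_two, Real.cos_pi_div_two, zero_pow (by omega), one_pow]
  have : (0:ℝ) ≤ (N - 2 : ℕ) := Nat.cast_nonneg _
  linarith

lemma sSeq0_props (N : ℕ) (hN : 4 ≤ N) :
    0 < sSeq N 0 ∧ sSeq N 0 < π ∧ Efun (N - 2) (sSeq N 0) = 0 := by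
  obtain ⟨h1, h2, h3⟩ := root_lemma (Efun_continuous (N-2)) (Efun_zero_neg N)
    Real.pi_pos (Efun_pi N hN).le
  rw [← sSeq_zero_def] at h1 h2 h3
  refine ⟨h1, lt_of_le_of_ne h2 ?_, h3⟩
  intro heq
  rw [heq] at h3
  exact absurd h3 (Efun_pi N hN).ne'

lemma sSeq_step (N : ℕ) (j : ℕ) (hj0 : 0 < sSeq N j) (hjπ : sSeq N j < π) :
    0 < sSeq N (j+1) ∧ sSeq N (j+1) ≤ sSeq N j ∧
      Gfun N (j+1) (sSeq N j) (sSeq N (j+1)) = 0 := by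
  have hsin : 0 < Real.sin (sSeq N j / 2) :=
    Real.sin_pos_of_pos_of_lt_pi (by linarith) (by linarith [Real.pi_pos])
  have h0 : Gfun N (j+1) (sSeq N j) 0 < 0 := by
    unfold Gfun
    simp only [zero_div, Real.sin_zero, Real.cos_zero, one_pow, mul_one]
    simpa using hsin
  have hC : 0 < Real.cos (sSeq N j / 2) := by
    apply Real.cos_pos_of_mem_Ioo
    constructor
    · have := Real.pi_pos; linarith
    · linarith
  have hb : 0 ≤ Gfun N (j+1) (sSeq N j) (sSeq N j) := by
    unfold Gfun
    have hc1 : Real.cos (sSeq N j / 2) ^ (2 * (N - (j+1) - 2)) ≤ 1 :=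
      pow_le_one₀ hC.le (Real.cos_le_one _)
    have hc0 : 0 ≤ Real.cos (sSeq N j / 2) ^ (2 * (N - (j+1) - 2)) := pow_nonneg hC.le _
    have hr : (0:ℝ) ≤ ((N - (j+1) - 2 : ℕ) : ℝ) := Nat.cast_nonneg _
    nlinarith [sq_nonneg (Real.sin (sSeq N j / 2))]
  obtain ⟨h1, h2, h3⟩ := root_lemma (Gfun_continuous N (j+1) (sSeq N j)) h0 hj0 hb
  rw [← sSeq_succ_def] at h1 h2 h3
  exact ⟨h1, h2, h3⟩

lemma sSeq_props (N : ℕ) (hN : 4 ≤ N) :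
    ∀ j, 0 < sSeq N j ∧ sSeq N j < π ∧ sSeq N (j+1) ≤ sSeq N j := by
  intro j
  induction j with
  | zero =>
    obtain ⟨h1, h2, _⟩ := sSeq0_props N hN
    exact ⟨h1, h2, (sSeq_step N 0 h1 h2).2.1⟩
  | succ j ih =>
    obtain ⟨h1, h2, h3⟩ := ih
    have hj1 : 0 < sSeq N (j+1) := (sSeq_step N j h1 h2).1
    have hj1π : sSeq N (j+1) < π := lt_of_le_of_lt h3 h2
    exact ⟨hj1, hj1π, (sSeq_step N (j+1) hj1 hj1π).2.1⟩

lemma sSeq_anti (N : ℕ) (hN : 4 ≤ N) : Antitone (sSeq N) :=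
  antitone_nat_of_succ_le fun j => (sSeq_props N hN j).2.2

lemma sSeq_root_succ (N : ℕ) (hN : 4 ≤ N) (j : ℕ) :
    Gfun N (j+1) (sSeq N j) (sSeq N (j+1)) = 0 := by
  obtain ⟨h1, h2, _⟩ := sSeq_props N hN j
  exact (sSeq_step N j h1 h2).2.2

lemma Iset_bounds {s x : ℝ} (hs0 : 0 ≤ s) (hsπ : s ≤ π) (hx : x ∈ Iset s) :
    |Real.cos x| ≤ Real.sin (s / 2) ∧ Real.cos (s / 2) ≤ Real.sin x := by
  obtain ⟨h1, h2⟩ := hx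
  have hux : x = π / 2 - (π / 2 - x) := by ring
  set u := π / 2 - x with hu
  have h3 : |u| ≤ s / 2 := by
    rw [abs_le]; constructor <;> [skip; skip] <;> simp only [hu] <;> linarith
  have hs2 : s / 2 ≤ π / 2 := by linarith
  have hb : ∀ v : ℝ, |v| ≤ s / 2 → Real.sin v ≤ Real.sin (s / 2) := by
    intro v hv
    have h1 := (abs_le.mp hv).1
    have h2 := (abs_le.mp hv).2
    calc Real.sin v = Real.cos (π / 2 - v) := (Real.cos_pi_div_two_sub v).symm
    _ ≤ Real.cos (π / 2 - s / 2) :=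
      Real.cos_le_cos_of_nonneg_of_le_pi (by linarith) (by linarith [Real.pi_pos]) (by linarith)
    _ = Real.sin (s / 2) := Real.cos_pi_div_two_sub _
  constructor
  · rw [hux, Real.cos_pi_div_two_sub, abs_le]
    refine ⟨?_, hb u h3⟩
    have := hb (-u) (by rwa [abs_neg])
    rw [Real.sin_neg] at this
    linarith
  · rw [hux, Real.sin_pi_div_two_sub]
    have := Real.cos_le_cos_of_nonneg_of_le_pi (abs_nonneg u) (by linarith) h3
    rwa [Real.cos_abs] at this

lemma Iset_mem_Icc {s x : ℝ} (hs0 : 0 ≤ s) (hsπ : s ≤ π) (hx : x ∈ Iset s) :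
    0 ≤ x ∧ x ≤ π := by
  obtain ⟨h1, h2⟩ := hx
  constructor <;> linarith

lemma Iset_subset_Iset {s s' : ℝ} (h : s ≤ s') : Iset s ⊆ Iset s' :=
  Set.Icc_subset_Icc (by linarith) (by linarith)

lemma Iset_subset_Ioo {s : ℝ} (hs0 : 0 < s) (hsπ : s < π) : Iset s ⊆ Set.Ioo 0 π := by
  rintro x ⟨h1, h2⟩
  constructor <;> [linarith; linarith]

lemma arccos_mem_Iset {s ρ : ℝ} (hs0 : 0 ≤ s) (hsπ : s ≤ π)
    (h : |ρ| ≤ Real.sin (s / 2)) : Real.arccos ρ ∈ Iset s := by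
  have hρ1 : |ρ| ≤ 1 := h.trans (Real.sin_le_one _)
  have h1 := (abs_le.mp h).1
  have h2 := (abs_le.mp h).2
  have harc : |Real.arcsin ρ| ≤ s / 2 := by
    rw [abs_le]
    constructor
    · have : Real.arcsin (-Real.sin (s/2)) ≤ Real.arcsin ρ := Real.monotone_arcsin (by linarith)
      rwa [← Real.sin_neg, Real.arcsin_sin (by linarith [Real.pi_pos]) (by linarith [Real.pi_pos])] at this
    · have : Real.arcsin ρ ≤ Real.arcsin (Real.sin (s/2)) := Real.monotone_arcsin h2
      rwa [Real.arcsin_sin (by linarith [Real.pi_pos]) (by linarith [Real.pi_pos])] at this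
  rw [Real.arccos_eq_pi_div_two_sub_arcsin]
  obtain ⟨hl, hr⟩ := abs_le.mp harc
  exact ⟨by linarith, by linarith⟩

/-- Basic bounds on Fangle and Xangle given coordinatewise bounds. -/
lemma FX_bounds (a b : ℕ → ℝ) (r : ℕ) (c C : ℝ) (hc : 0 ≤ c) (hC : 0 ≤ C) (hC1 : C ≤ 1)
    (ha : ∀ m ∈ Finset.Icc 1 r, |Real.cos (a m)| ≤ c ∧ C ≤ Real.sin (a m))
    (hb : ∀ m ∈ Finset.Icc 1 r, |Real.cos (b m)| ≤ c ∧ C ≤ Real.sin (b m)) :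
    |Fangle a b r| ≤ (r : ℝ) * c ^ 2 ∧ C ^ (2 * r) ≤ Xangle a b r ∧ Xangle a b r ≤ 1 := by
  have hsub : ∀ m ∈ Finset.Icc 1 r, ∀ l ∈ Finset.Icc 1 (m - 1), l ∈ Finset.Icc 1 r := by
    intro m hm l hl
    rw [Finset.mem_Icc] at *
    omega
  have hprod01 : ∀ m ∈ Finset.Icc 1 r,
      0 ≤ (∏ l ∈ Finset.Icc 1 (m - 1), (Real.sin (a l) * Real.sin (b l))) ∧
      (∏ l ∈ Finset.Icc 1 (m - 1), (Real.sin (a l) * Real.sin (b l))) ≤ 1 := by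
    intro m hm
    constructor
    · apply Finset.prod_nonneg
      intro l hl
      have hal := (ha l (hsub m hm l hl)).2
      have hbl := (hb l (hsub m hm l hl)).2
      exact mul_nonneg (hC.trans hal) (hC.trans hbl)
    · apply Finset.prod_le_one
      · intro l hl
        have hal := (ha l (hsub m hm l hl)).2
        have hbl := (hb l (hsub m hm l hl)).2
        exact mul_nonneg (hC.trans hal) (hC.trans hbl)
      · intro l hl
        exact mul_le_one₀ (Real.sin_le_one _) (hC.trans (hb l (hsub m hm l hl)).2) (Real.sin_le_one _)
  refine ⟨?_, ?_, ?_⟩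
  · calc |Fangle a b r| ≤ ∑ m ∈ Finset.Icc 1 r,
        |Real.cos (a m) * Real.cos (b m) *
          ∏ l ∈ Finset.Icc 1 (m - 1), (Real.sin (a l) * Real.sin (b l))| :=
        Finset.abs_sum_le_sum_abs _ _
    _ ≤ ∑ m ∈ Finset.Icc 1 r, c ^ 2 := by
        apply Finset.sum_le_sum
        intro m hm
        rw [abs_mul, abs_mul]
        have h1 := (ha m hm).1
        have h2 := (hb m hm).1
        have h3 := (hprod01 m hm)
        have h4 : |∏ l ∈ Finset.Icc 1 (m - 1), (Real.sin (a l) * Real.sin (b l))| ≤ 1 := by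
          rw [abs_of_nonneg h3.1]; exact h3.2
        calc |Real.cos (a m)| * |Real.cos (b m)| *
            |∏ l ∈ Finset.Icc 1 (m - 1), (Real.sin (a l) * Real.sin (b l))|
            ≤ (c * c) * 1 := by
              apply mul_le_mul (mul_le_mul h1 h2 (abs_nonneg _) hc) h4 (abs_nonneg _)
              positivity
          _ = c ^ 2 := by ring
    _ = (r : ℝ) * c ^ 2 := by
        rw [Finset.sum_const, Nat.card_Icc]
        simp [nsmul_eq_mul]
  · have hcard : (Finset.Icc 1 r).card = r := by rw [Nat.card_Icc]; omega
    calc C ^ (2*r) = (C^2)^r := pow_mul C 2 r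
    _ = ∏ _m ∈ Finset.Icc 1 r, C^2 := by rw [Finset.prod_const, hcard]
    _ ≤ Xangle a b r := by
        apply Finset.prod_le_prod
        · intro m hm; positivity
        · intro m hm
          have h1 := (ha m hm).2
          have h2 := (hb m hm).2
          have h3 := mul_le_mul h1 h2 hC (hC.trans h1)
          calc C^2 = C * C := sq C
          _ ≤ _ := h3
  · apply Finset.prod_le_one
    · intro m hm
      exact mul_nonneg (hC.trans (ha m hm).2) (hC.trans (hb m hm).2)
    · intro m hm
      exact mul_le_one₀ (Real.sin_le_one _) (hC.trans (hb m hm).2) (Real.sin_le_one _)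

lemma solve_step (r : ℕ) (s t : ℝ) (hs0 : 0 < s) (hsπ : s < π) (ht0 : 0 ≤ t) (ht1 : t ≤ 1)
    (a b : ℕ → ℝ)
    (ha : ∀ m ∈ Finset.Icc 1 r, |Real.cos (a m)| ≤ Real.sin (s/2) ∧ Real.cos (s/2) ≤ Real.sin (a m))
    (hb : ∀ m ∈ Finset.Icc 1 r, |Real.cos (b m)| ≤ Real.sin (s/2) ∧ Real.cos (s/2) ≤ Real.sin (b m))
    (y : ℝ) (hy : y ∈ Iset s)
    (key : Real.sin (s/2) + (r:ℝ) * Real.sin (s/2)^2 ≤ t * Real.cos (s/2)^(2*r)) :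
    |(Real.cos y - Fangle a b r) / Xangle a b r| ≤ t ∧
    Real.arccos (Fangle a b r + Real.cos (Real.arccos ((Real.cos y - Fangle a b r) / Xangle a b r))
      * Xangle a b r) = y := by
  set c := Real.sin (s/2) with hc
  set C := Real.cos (s/2) with hCdef
  have hcpos : 0 < c := Real.sin_pos_of_pos_of_lt_pi (by linarith) (by linarith [Real.pi_pos])
  have hCpos : 0 < C := Real.cos_pos_of_mem_Ioo ⟨by linarith [Real.pi_pos], by linarith⟩
  have hC1 : C ≤ 1 := Real.cos_le_one _
  obtain ⟨hF, hX, hX1⟩ := FX_bounds a b r c C hcpos.le hCpos.le hC1 ha hb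
  have hXpos : 0 < Xangle a b r := lt_of_lt_of_le (pow_pos hCpos _) hX
  have hcosy : |Real.cos y| ≤ c := (Iset_bounds hs0.le hsπ.le hy).1
  have hnum : |Real.cos y - Fangle a b r| ≤ t * Xangle a b r := by
    have h1 : |Real.cos y - Fangle a b r| ≤ c + (r:ℝ) * c^2 := by
      calc |Real.cos y - Fangle a b r| ≤ |Real.cos y| + |Fangle a b r| := abs_sub _ _
      _ ≤ c + (r:ℝ) * c^2 := add_le_add hcosy hF
    calc |Real.cos y - Fangle a b r| ≤ t * C^(2*r) := h1.trans key
    _ ≤ t * Xangle a b r := mul_le_mul_of_nonneg_left hX ht0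
  have hρ : |(Real.cos y - Fangle a b r) / Xangle a b r| ≤ t := by
    rw [abs_div, abs_of_pos hXpos, div_le_iff₀ hXpos]
    exact hnum
  refine ⟨hρ, ?_⟩
  have hρ1 : |(Real.cos y - Fangle a b r) / Xangle a b r| ≤ 1 := hρ.trans ht1
  rw [Real.cos_arccos (abs_le.mp hρ1).1 (abs_le.mp hρ1).2]
  rw [div_mul_cancel₀ _ hXpos.ne']
  have : Fangle a b r + (Real.cos y - Fangle a b r) = Real.cos y := by ring
  rw [this]
  obtain ⟨hy0, hyπ⟩ := Iset_mem_Icc hs0.le hsπ.le hy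
  exact Real.arccos_cos hy0 hyπ

set_option maxHeartbeats 1000000 in
lemma solve_strict (r : ℕ) (hr : 2 ≤ r) (s : ℝ) (hs0 : 0 < s) (hsπ : s < π)
    (a b : ℕ → ℝ)
    (ha : ∀ m ∈ Finset.Icc 1 r, |Real.cos (a m)| ≤ Real.sin (s/2) ∧ Real.cos (s/2) ≤ Real.sin (a m))
    (hb : ∀ m ∈ Finset.Icc 1 r, |Real.cos (b m)| ≤ Real.sin (s/2) ∧ Real.cos (s/2) ≤ Real.sin (b m))
    (y : ℝ) (hy : y ∈ Iset s)
    (key : Real.sin (s/2) + (r:ℝ) * Real.sin (s/2)^2 = Real.cos (s/2)^(2*r)) :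
    |(Real.cos y - Fangle a b r) / Xangle a b r| < 1 ∧
    Real.arccos (Fangle a b r + Real.cos (Real.arccos ((Real.cos y - Fangle a b r) / Xangle a b r))
      * Xangle a b r) = y := by
  set c := Real.sin (s/2) with hc
  set C := Real.cos (s/2) with hCdef
  have hcpos : 0 < c := Real.sin_pos_of_pos_of_lt_pi (by linarith) (by linarith [Real.pi_pos])
  have hCpos : 0 < C := Real.cos_pos_of_mem_Ioo ⟨by linarith [Real.pi_pos], by linarith⟩
  have hC1 : C ≤ 1 := Real.cos_le_one _
  obtain ⟨hF, hX, hX1⟩ := FX_bounds a b r c C hcpos.le hCpos.le hC1 ha hb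
  have hXpos : 0 < Xangle a b r := lt_of_lt_of_le (pow_pos hCpos _) hX
  have hcosy : |Real.cos y| ≤ c := (Iset_bounds hs0.le hsπ.le hy).1
  -- membership of 1 in Icc 1 r
  have h1mem : 1 ∈ Finset.Icc 1 r := Finset.mem_Icc.mpr ⟨le_refl 1, by omega⟩
  have ha1 := ha 1 h1mem
  have hb1 := hb 1 h1mem
  have hsa1 : 0 ≤ Real.sin (a 1) := hCpos.le.trans ha1.2
  have hsb1 : 0 ≤ Real.sin (b 1) := hCpos.le.trans hb1.2
  set q := Real.sin (a 1) * Real.sin (b 1) with hq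
  have hq1 : q ≤ 1 := mul_le_one₀ (Real.sin_le_one _) hsb1 (Real.sin_le_one _)
  have hq0 : 0 ≤ q := mul_nonneg hsa1 hsb1
  -- strict bound on |F|
  have hFstrict : |Fangle a b r| < (r:ℝ) * c^2 := by
    -- per-term bounds
    have hterm1 : |Real.cos (a 1) * Real.cos (b 1) *
        ∏ l ∈ Finset.Icc 1 (1 - 1), (Real.sin (a l) * Real.sin (b l))| = |Real.cos (a 1) * Real.cos (b 1)| := by
      norm_num
    have htermm : ∀ m ∈ Finset.Icc 2 r, |Real.cos (a m) * Real.cos (b m) *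
        ∏ l ∈ Finset.Icc 1 (m - 1), (Real.sin (a l) * Real.sin (b l))| ≤ c^2 * q := by
      intro m hm
      rw [Finset.mem_Icc] at hm
      have hmem : m ∈ Finset.Icc 1 r := Finset.mem_Icc.mpr ⟨by omega, hm.2⟩
      have hprod : ∏ l ∈ Finset.Icc 1 (m - 1), (Real.sin (a l) * Real.sin (b l)) ≤ q := by
        have hsplit1 : Finset.Icc 1 (m-1) = insert 1 (Finset.Icc 2 (m-1)) := by
          ext l
          simp only [Finset.mem_insert, Finset.mem_Icc]
          omega
        have hnm : (1:ℕ) ∉ Finset.Icc 2 (m-1) := by simp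
        rw [hsplit1, Finset.prod_insert hnm]
        have hrest : ∏ l ∈ Finset.Icc 2 (m-1), (Real.sin (a l) * Real.sin (b l)) ≤ 1 := by
          apply Finset.prod_le_one
          · intro l hl
            have hlr : l ∈ Finset.Icc 1 r := by
              rw [Finset.mem_Icc] at hl ⊢; omega
            exact mul_nonneg (hCpos.le.trans (ha l hlr).2) (hCpos.le.trans (hb l hlr).2)
          · intro l hl
            have hlr : l ∈ Finset.Icc 1 r := by
              rw [Finset.mem_Icc] at hl ⊢; omega
            exact mul_le_one₀ (Real.sin_le_one _) (hCpos.le.trans (hb l hlr).2) (Real.sin_le_one _)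
        calc Real.sin (a 1) * Real.sin (b 1) *
            ∏ l ∈ Finset.Icc 2 (m-1), (Real.sin (a l) * Real.sin (b l))
            ≤ Real.sin (a 1) * Real.sin (b 1) * 1 := by
              apply mul_le_mul_of_nonneg_left hrest hq0
          _ = q := by rw [mul_one]
      have hprodnn : 0 ≤ ∏ l ∈ Finset.Icc 1 (m - 1), (Real.sin (a l) * Real.sin (b l)) := by
        apply Finset.prod_nonneg
        intro l hl
        have hlr : l ∈ Finset.Icc 1 r := by rw [Finset.mem_Icc] at hl ⊢; omega
        exact mul_nonneg (hCpos.le.trans (ha l hlr).2) (hCpos.le.trans (hb l hlr).2)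
      rw [abs_mul, abs_of_nonneg hprodnn]
      have h1 := (ha m hmem).1
      have h2 := (hb m hmem).1
      calc |Real.cos (a m) * Real.cos (b m)| *
          (∏ l ∈ Finset.Icc 1 (m - 1), (Real.sin (a l) * Real.sin (b l)))
          ≤ (c * c) * q := by
            apply mul_le_mul _ hprod hprodnn (by positivity)
            rw [abs_mul]
            exact mul_le_mul h1 h2 (abs_nonneg _) hcpos.le
        _ = c^2 * q := by ring
    -- split sum
    have hsplit : Finset.Icc 1 r = insert 1 (Finset.Icc 2 r) := by
      ext l
      simp only [Finset.mem_insert, Finset.mem_Icc]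
      omega
    have hnotmem : (1:ℕ) ∉ Finset.Icc 2 r := by simp
    have hsum : |Fangle a b r| ≤ |Real.cos (a 1) * Real.cos (b 1)| + ((r:ℝ) - 1) * (c^2 * q) := by
      unfold Fangle
      rw [hsplit, Finset.sum_insert hnotmem]
      calc |Real.cos (a 1) * Real.cos (b 1) *
            ∏ l ∈ Finset.Icc 1 (1 - 1), (Real.sin (a l) * Real.sin (b l)) +
            ∑ m ∈ Finset.Icc 2 r, Real.cos (a m) * Real.cos (b m) *
            ∏ l ∈ Finset.Icc 1 (m - 1), (Real.sin (a l) * Real.sin (b l))|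
          ≤ |Real.cos (a 1) * Real.cos (b 1) *
            ∏ l ∈ Finset.Icc 1 (1 - 1), (Real.sin (a l) * Real.sin (b l))| +
            |∑ m ∈ Finset.Icc 2 r, Real.cos (a m) * Real.cos (b m) *
            ∏ l ∈ Finset.Icc 1 (m - 1), (Real.sin (a l) * Real.sin (b l))| := abs_add_le _ _
      _ ≤ |Real.cos (a 1) * Real.cos (b 1)| + ((r:ℝ) - 1) * (c^2 * q) := by
          apply add_le_add
          · rw [hterm1]
          · calc |∑ m ∈ Finset.Icc 2 r, Real.cos (a m) * Real.cos (b m) *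
                ∏ l ∈ Finset.Icc 1 (m - 1), (Real.sin (a l) * Real.sin (b l))|
                ≤ ∑ m ∈ Finset.Icc 2 r, |Real.cos (a m) * Real.cos (b m) *
                ∏ l ∈ Finset.Icc 1 (m - 1), (Real.sin (a l) * Real.sin (b l))| :=
                  Finset.abs_sum_le_sum_abs _ _
            _ ≤ ∑ m ∈ Finset.Icc 2 r, c^2 * q := Finset.sum_le_sum htermm
            _ = ((r:ℝ) - 1) * (c^2 * q) := by
                rw [Finset.sum_const, Nat.card_Icc, nsmul_eq_mul]
                congr 1
                have : r + 1 - 2 = r - 1 := by omega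
                rw [this]
                rw [Nat.cast_sub (by omega)]
                norm_num
    -- case on q
    rcases eq_or_lt_of_le hq1 with hqeq | hqlt
    · -- q = 1 forces sin a1 = sin b1 = 1, cos a1 = 0
      have hsa : Real.sin (a 1) = 1 := by
        by_contra hne
        have h1 : Real.sin (a 1) < 1 := lt_of_le_of_ne (Real.sin_le_one _) hne
        nlinarith [Real.sin_le_one (b 1)]
      have hca : Real.cos (a 1) = 0 := by
        have := Real.sin_sq_add_cos_sq (a 1)
        nlinarith
      rw [hca] at hsum
      simp only [zero_mul, abs_zero, zero_add] at hsum
      have hlt : ((r:ℝ) - 1) * (c^2 * q) < (r:ℝ) * c^2 := by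
        rw [hqeq, mul_one]
        have hr2 : (2:ℝ) ≤ (r:ℝ) := by exact_mod_cast hr
        nlinarith [hcpos]
      linarith
    · -- q < 1
      have hcab : |Real.cos (a 1) * Real.cos (b 1)| ≤ c^2 := by
        rw [abs_mul]
        calc |Real.cos (a 1)| * |Real.cos (b 1)| ≤ c * c :=
          mul_le_mul ha1.1 hb1.1 (abs_nonneg _) hcpos.le
        _ = c^2 := (sq c).symm
      have hc2q : c^2 * q < c^2 := by nlinarith [pow_pos hcpos 2, hqlt]
      have : ((r:ℝ) - 1) * (c^2 * q) < ((r:ℝ) - 1) * c^2 := by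
        have hr2 : (2:ℝ) ≤ (r:ℝ) := by exact_mod_cast hr
        exact mul_lt_mul_of_pos_left hc2q (by linarith)
      calc |Fangle a b r| ≤ |Real.cos (a 1) * Real.cos (b 1)| + ((r:ℝ) - 1) * (c^2 * q) := hsum
      _ < c^2 + ((r:ℝ) - 1) * c^2 := by linarith
      _ = (r:ℝ) * c^2 := by ring
  -- conclude
  have hnum : |Real.cos y - Fangle a b r| < Xangle a b r := by
    calc |Real.cos y - Fangle a b r| ≤ |Real.cos y| + |Fangle a b r| := abs_sub _ _
    _ < c + (r:ℝ) * c^2 := by linarith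
    _ = C^(2*r) := key
    _ ≤ Xangle a b r := hX
  have hρ : |(Real.cos y - Fangle a b r) / Xangle a b r| < 1 := by
    rw [abs_div, abs_of_pos hXpos, div_lt_one hXpos]
    exact hnum
  refine ⟨hρ, ?_⟩
  rw [Real.cos_arccos (abs_le.mp hρ.le).1 (abs_le.mp hρ.le).2]
  rw [div_mul_cancel₀ _ hXpos.ne']
  have : Fangle a b r + (Real.cos y - Fangle a b r) = Real.cos y := by ring
  rw [this]
  obtain ⟨hy0, hyπ⟩ := Iset_mem_Icc hs0.le hsπ.le hy
  exact Real.arccos_cos hy0 hyπ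

noncomputable def PhiAux (x : ℕ → ℕ → ℝ) : ℕ → ℕ → ℕ → ℝ
  | 0 => fun _ _ => Real.pi / 2
  | i+1 => fun m k =>
      if m ≤ i then PhiAux x i m k
      else if m = 1 then x m k
      else Real.arccos ((Real.cos (x m k) - Fphi (PhiAux x i) m k) / Xphi (PhiAux x i) m k)

noncomputable def buildPhi (x : ℕ → ℕ → ℝ) (m k : ℕ) : ℝ := PhiAux x m m k

lemma PhiAux_agree (x : ℕ → ℕ → ℝ) : ∀ i m k, m ≤ i → PhiAux x i m k = buildPhi x m k := by
  intro i
  induction i with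
  | zero =>
    intro m k hm
    have : m = 0 := Nat.le_zero.mp hm
    subst this
    rfl
  | succ i ih =>
    intro m k hm
    rcases Nat.lt_or_ge m (i+1) with h | h
    · have hmi : m ≤ i := by omega
      have : PhiAux x (i+1) m k = PhiAux x i m k := by
        show (if m ≤ i then PhiAux x i m k else _) = _
        rw [if_pos hmi]
      rw [this, ih m k hmi]
    · have : m = i + 1 := by omega
      subst this
      rfl

lemma Fphi_congr (φ ψ : ℕ → ℕ → ℝ) (i j : ℕ)
    (h : ∀ m, 1 ≤ m → m ≤ i - 1 → ∀ k, φ m k = ψ m k) : Fphi φ i j = Fphi ψ i j := by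
  unfold Fphi
  apply Finset.sum_congr rfl
  intro m hm
  rw [Finset.mem_Icc] at hm
  rw [h m hm.1 hm.2, h m hm.1 hm.2]
  congr 1
  apply Finset.prod_congr rfl
  intro l hl
  rw [Finset.mem_Icc] at hl
  rw [h l hl.1 (by omega), h l hl.1 (by omega)]

lemma Xphi_congr (φ ψ : ℕ → ℕ → ℝ) (i j : ℕ)
    (h : ∀ m, 1 ≤ m → m ≤ i - 1 → ∀ k, φ m k = ψ m k) : Xphi φ i j = Xphi ψ i j := by
  unfold Xphi
  apply Finset.prod_congr rfl
  intro m hm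
  rw [Finset.mem_Icc] at hm
  rw [h m hm.1 hm.2, h m hm.1 hm.2]

lemma buildPhi_one (x : ℕ → ℕ → ℝ) (j : ℕ) : buildPhi x 1 j = x 1 j := by
  show PhiAux x 1 1 j = x 1 j
  simp [PhiAux]

lemma buildPhi_succ (x : ℕ → ℕ → ℝ) (i j : ℕ) (hi : 2 ≤ i) :
    buildPhi x i j = Real.arccos ((Real.cos (x i j) - Fphi (buildPhi x) i j) /
      Xphi (buildPhi x) i j) := by
  obtain ⟨n, rfl⟩ : ∃ n, i = n + 1 := ⟨i - 1, by omega⟩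
  have hn : ¬ (n + 1 ≤ n) := by omega
  have hne : ¬ (n + 1 = 1) := by omega
  have h1 : buildPhi x (n+1) j = Real.arccos ((Real.cos (x (n+1) j) -
      Fphi (PhiAux x n) (n+1) j) / Xphi (PhiAux x n) (n+1) j) := by
    show (if n + 1 ≤ n then _ else if n + 1 = 1 then _ else
      Real.arccos ((Real.cos (x (n+1) j) - Fphi (PhiAux x n) (n+1) j) /
        Xphi (PhiAux x n) (n+1) j)) = _
    rw [if_neg hn, if_neg hne]
  rw [h1]
  have hagree : ∀ m, 1 ≤ m → m ≤ (n+1) - 1 → ∀ k, PhiAux x n m k = buildPhi x m k := by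
    intro m _ hm k
    exact PhiAux_agree x n m k (by omega)
  rw [Fphi_congr _ _ _ _ hagree, Xphi_congr _ _ _ _ hagree]

lemma Fphi_eq_Fangle (φ : ℕ → ℕ → ℝ) (i j : ℕ) :
    Fphi φ i j = Fangle (fun m => φ m i) (fun m => φ m j) (i - 1) := rfl

lemma Xphi_eq_Xangle (φ : ℕ → ℕ → ℝ) (i j : ℕ) :
    Xphi φ i j = Xangle (fun m => φ m i) (fun m => φ m j) (i - 1) := rfl


/-- with s = s_N^{(N−3)}, the hypercube I_s^{C(N,2)} is contained in
Ω_N = J_N((0,π)^{C(N,2)}). -/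
theorem hypercube_subset_OmegaN (N : ℕ) (hN : 4 ≤ N) (x : ℕ → ℕ → ℝ)
    (hx : ∀ i j : ℕ, 1 ≤ i → i < j → j ≤ N → x i j ∈ Iset (sSeq N (N - 3))) :
    ∃ φ : ℕ → ℕ → ℝ, ∀ i j : ℕ, 1 ≤ i → i < j → j ≤ N →
      φ i j ∈ Set.Ioo (0 : ℝ) Real.pi ∧ alphaMap φ i j = x i j := by
  have hprops := sSeq_props N hN
  have hanti := sSeq_anti N hN
  have main : ∀ i : ℕ, ∀ j : ℕ, 1 ≤ i → i < j → j ≤ N →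
      (i ≤ N - 2 → buildPhi x i j ∈ Iset (sSeq N (N - 2 - i))) ∧
      buildPhi x i j ∈ Set.Ioo (0:ℝ) π ∧ alphaMap (buildPhi x) i j = x i j := by
    intro i
    induction i using Nat.strong_induction_on with
    | _ i IH =>
      intro j hi1 hij hjN
      rcases eq_or_lt_of_le hi1 with hi1' | hi2
      · -- i = 1
        subst hi1'
        have hx1 : x 1 j ∈ Iset (sSeq N (N - 3)) := hx 1 j le_rfl hij hjN
        have h13 : N - 2 - 1 = N - 3 := by omega
        refine ⟨fun _ => ?_, ?_, ?_⟩
        · rw [h13, buildPhi_one]; exact hx1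
        · rw [buildPhi_one]
          exact Iset_subset_Ioo (hprops (N-3)).1 (hprops (N-3)).2.1 hx1
        · show alphaMap (buildPhi x) 1 j = x 1 j
          unfold alphaMap
          rw [if_pos rfl, buildPhi_one]
      · -- 2 ≤ i
        have hi2' : 2 ≤ i := hi2
        have hiN : i < N := lt_of_lt_of_le hij hjN
        set r := i - 1 with hr
        have hr1 : 1 ≤ r := by omega
        -- the level we work at
        set J : ℕ := N - 1 - i with hJ
        have hJN3 : J ≤ N - 3 := by omega
        set a : ℕ → ℝ := fun m => buildPhi x m i with hadef
        set b : ℕ → ℝ := fun m => buildPhi x m j with hbdef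
        have sJpos := (hprops J).1
        have sJpi := (hprops J).2.1
        -- input bounds at level sSeq N J
        have hin : ∀ m ∈ Finset.Icc 1 r,
            (|Real.cos (a m)| ≤ Real.sin (sSeq N J / 2) ∧
             Real.cos (sSeq N J / 2) ≤ Real.sin (a m)) ∧
            (|Real.cos (b m)| ≤ Real.sin (sSeq N J / 2) ∧
             Real.cos (sSeq N J / 2) ≤ Real.sin (b m)) := by
          intro m hm
          rw [Finset.mem_Icc] at hm
          have hmlt : m < i := by omega
          have hmN2 : m ≤ N - 2 := by omega
          have hJle : J ≤ N - 2 - m := by omega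
          have hsub : Iset (sSeq N (N - 2 - m)) ⊆ Iset (sSeq N J) :=
            Iset_subset_Iset (hanti hJle)
          have hai := ((IH m hmlt i hm.1 hmlt hiN.le).1 hmN2)
          have hbj := ((IH m hmlt j hm.1 (by omega) hjN).1 hmN2)
          exact ⟨Iset_bounds sJpos.le sJpi.le (hsub hai),
                 Iset_bounds sJpos.le sJpi.le (hsub hbj)⟩
        have hy : x i j ∈ Iset (sSeq N J) :=
          Iset_subset_Iset (hanti hJN3) (hx i j hi1 hij hjN)
        have heq_phi : buildPhi x i j = Real.arccos
            ((Real.cos (x i j) - Fangle a b r) / Xangle a b r) := by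
          rw [buildPhi_succ x i j hi2']
          rw [Fphi_eq_Fangle, Xphi_eq_Xangle]
        have halpha_form : alphaMap (buildPhi x) i j =
            Real.arccos (Fangle a b r + Real.cos (buildPhi x i j) * Xangle a b r) := by
          unfold alphaMap
          rw [if_neg (by omega : ¬ i = 1), Fphi_eq_Fangle, Xphi_eq_Xangle]
        rcases Nat.lt_or_ge i (N - 1) with hiN2 | hiN1
        · -- 2 ≤ i ≤ N - 2 : use solve_step
          have hJ1 : 1 ≤ J := by omega
          obtain ⟨J', hJ'⟩ : ∃ J', J = J' + 1 := ⟨J - 1, by omega⟩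
          rw [hJ'] at sJpos sJpi hin hy
          have hroot := sSeq_root_succ N hN J'
          have hNJ2 : N - (J' + 1) - 2 = r := by omega
          unfold Gfun at hroot
          rw [hNJ2] at hroot
          set t := Real.sin (sSeq N J' / 2) with ht
          have hJ'pos := (hprops J').1
          have hJ'pi := (hprops J').2.1
          have htpos : 0 < t := Real.sin_pos_of_pos_of_lt_pi (by linarith)
            (by linarith [Real.pi_pos])
          have hkey : Real.sin (sSeq N (J'+1)/2) + (r:ℝ) * Real.sin (sSeq N (J'+1)/2)^2 ≤
              t * Real.cos (sSeq N (J'+1)/2)^(2*r) := by linarith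
          obtain ⟨hρ, heq⟩ := solve_step r (sSeq N (J'+1)) t sJpos sJpi htpos.le
            (Real.sin_le_one _) a b (fun m hm => (hin m hm).1) (fun m hm => (hin m hm).2)
            (x i j) hy hkey
          have hmem : buildPhi x i j ∈ Iset (sSeq N J') := by
            rw [heq_phi]
            exact arccos_mem_Iset hJ'pos.le hJ'pi.le hρ
          have hJ'eq : J' = N - 2 - i := by omega
          refine ⟨fun _ => ?_, ?_, ?_⟩
          · rw [← hJ'eq]; exact hmem
          · exact Iset_subset_Ioo hJ'pos hJ'pi hmem
          · rw [halpha_form, heq_phi]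
            exact heq
        · -- i = N - 1 : use solve_strict
          have hieq : i = N - 1 := by omega
          have hJ0 : J = 0 := by omega
          have hr2 : 2 ≤ r := by omega
          have hroot := (sSeq0_props N hN).2.2
          have hNr : N - 2 = r := by omega
          unfold Efun at hroot
          rw [hNr] at hroot
          rw [hJ0] at sJpos sJpi hin hy
          have hkey : Real.sin (sSeq N 0/2) + (r:ℝ) * Real.sin (sSeq N 0/2)^2 =
              Real.cos (sSeq N 0/2)^(2*r) := by linarith
          obtain ⟨hρ, heq⟩ := solve_strict r hr2 (sSeq N 0) sJpos sJpi
            a b (fun m hm => (hin m hm).1) (fun m hm => (hin m hm).2) (x i j) hy hkey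
          have hmem : buildPhi x i j ∈ Set.Ioo (0:ℝ) π := by
            rw [heq_phi]
            constructor
            · exact Real.arccos_pos.mpr (abs_lt.mp hρ).2
            · refine lt_of_le_of_ne (Real.arccos_le_pi _) ?_
              intro hcon
              rw [Real.arccos_eq_pi] at hcon
              linarith [(abs_lt.mp hρ).1]
          refine ⟨fun hcon => absurd hcon (by omega), hmem, ?_⟩
          rw [halpha_form, heq_phi]
          exact heq
  refine ⟨buildPhi x, fun i j hi1 hij hjN => ?_⟩
  obtain ⟨_, h2, h3⟩ := main i j hi1 hij hjN
  exact ⟨h2, h3⟩
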